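/- Let f : [0,∞) → ℝ be continuous, let R > 0, let x_c ∈ ℝ², and let μ_R denote the uniform (normalized arclength) probability measure on the circle {x_c + R(cos φ, sin φ) : φ ∈ [0,2π)} ⊂ ℝ². Define the isotropic force F(d) = f(|d|) d for d ∈ ℝ². Then μ_R is an equilibrium state, i.e. ∫ F(x − y) dμ_R(y) = 0 for every x in the support of μ_R, if and only if ∫₀^π f(R √((1 − cos φ)² + sin² φ)) (1 − cos φ) dφ = 0. -/

import Mathlib

open MeasureTheory Real

/-- The uniform (normalized arclength) probability measure on the circle of
radius `R` centered at `xc ⊂ ℝ²`, realized as the pushforward of normalized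
Lebesgue measure on `[0, 2π)` under the standard parametrization. -/
noncomputable def uniformCircleMeasure (xc : ℝ × ℝ) (R : ℝ) : Measure (ℝ × ℝ) :=
  Measure.map (fun φ : ℝ => (xc.1 + R * Real.cos φ, xc.2 + R * Real.sin φ))
    (ENNReal.ofReal (2 * Real.pi)⁻¹ • volume.restrict (Set.Ico 0 (2 * Real.pi)))

noncomputable def ringG (f : ℝ → ℝ) (R : ℝ) : ℝ → ℝ :=
  fun ψ => f (R * Real.sqrt ((1 - Real.cos ψ) ^ 2 + Real.sin ψ ^ 2))

lemma ringG_cont {f : ℝ → ℝ} (hf : ContinuousOn f (Set.Ici 0)) {R : ℝ} (hR : 0 ≤ R) :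
    Continuous (ringG f R) := by
  have hc : Continuous fun ψ : ℝ =>
      R * Real.sqrt ((1 - Real.cos ψ) ^ 2 + Real.sin ψ ^ 2) :=
    continuous_const.mul (Real.continuous_sqrt.comp
      (((continuous_const.sub Real.continuous_cos).pow 2).add (Real.continuous_sin.pow 2)))
  exact hf.comp_continuous hc fun x => mul_nonneg hR (Real.sqrt_nonneg _)

lemma ringG_even (f : ℝ → ℝ) (R : ℝ) (ψ : ℝ) : ringG f R (-ψ) = ringG f R ψ := by
  simp [ringG]

lemma ringG_periodic (f : ℝ → ℝ) (R : ℝ) : Function.Periodic (ringG f R) (2 * π) := by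
  intro ψ; simp [ringG, Real.cos_add_two_pi, Real.sin_add_two_pi]

lemma even_integral {p : ℝ → ℝ} (hp : Continuous p) (heven : ∀ x, p (-x) = p x)
    (hper : Function.Periodic p (2 * π)) :
    ∫ φ in (0:ℝ)..(2 * π), p φ = 2 * ∫ φ in (0:ℝ)..π, p φ := by
  have h1 : ∫ φ in (-π)..(-π + 2 * π), p φ = ∫ φ in (0:ℝ)..(0 + 2 * π), p φ :=
    hper.intervalIntegral_add_eq (-π) 0
  rw [show -π + 2 * π = π by ring, show (0:ℝ) + 2 * π = 2 * π by ring] at h1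
  have h2 : ∫ φ in (-π)..(0:ℝ), p φ = ∫ φ in (0:ℝ)..π, p φ := by
    have h3 := intervalIntegral.integral_comp_neg p (a := 0) (b := π)
    have h4 : ∫ x in (0:ℝ)..π, p (-x) = ∫ x in (0:ℝ)..π, p x :=
      intervalIntegral.integral_congr fun x _ => heven x
    rw [h4, neg_zero] at h3; exact h3.symm
  have h5 : (∫ φ in (-π)..(0:ℝ), p φ) + (∫ φ in (0:ℝ)..π, p φ) = ∫ φ in (-π)..π, p φ :=
    intervalIntegral.integral_add_adjacent_intervals
      (hp.intervalIntegrable (μ := volume) (-π) 0) (hp.intervalIntegrable (μ := volume) 0 π)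
  rw [← h1, ← h5, h2]; ring

lemma odd_integral {p : ℝ → ℝ} (hp : Continuous p) (hodd : ∀ x, p (-x) = - p x)
    (hper : Function.Periodic p (2 * π)) :
    ∫ φ in (0:ℝ)..(2 * π), p φ = 0 := by
  have h1 : ∫ φ in (-π)..(-π + 2 * π), p φ = ∫ φ in (0:ℝ)..(0 + 2 * π), p φ :=
    hper.intervalIntegral_add_eq (-π) 0
  rw [show -π + 2 * π = π by ring, show (0:ℝ) + 2 * π = 2 * π by ring] at h1
  have h2 : ∫ φ in (-π)..(0:ℝ), p φ = - ∫ φ in (0:ℝ)..π, p φ := by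
    have h3 := intervalIntegral.integral_comp_neg p (a := 0) (b := π)
    have h4 : ∫ x in (0:ℝ)..π, p (-x) = - ∫ x in (0:ℝ)..π, p x := by
      rw [← intervalIntegral.integral_neg]
      exact intervalIntegral.integral_congr fun x _ => hodd x
    rw [h4, neg_zero] at h3; exact h3.symm
  have h5 : (∫ φ in (-π)..(0:ℝ), p φ) + (∫ φ in (0:ℝ)..π, p φ) = ∫ φ in (-π)..π, p φ :=
    intervalIntegral.integral_add_adjacent_intervals
      (hp.intervalIntegrable (μ := volume) (-π) 0) (hp.intervalIntegrable (μ := volume) 0 π)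
  rw [← h1, ← h5, h2]; ring

lemma trig_key (a b : ℝ) :
    (Real.cos a - Real.cos b) ^ 2 + (Real.sin a - Real.sin b) ^ 2
      = (1 - Real.cos (a - b)) ^ 2 + Real.sin (a - b) ^ 2 := by
  rw [Real.cos_sub, Real.sin_sub]
  nlinarith [Real.sin_sq_add_cos_sq a, Real.sin_sq_add_cos_sq b]

lemma ring_key (f : ℝ → ℝ) (hf : ContinuousOn f (Set.Ici 0))
    (R : ℝ) (hR : 0 < R) (xc : ℝ × ℝ) (θ : ℝ) :
    (∫ y, (f (Real.sqrt (((((xc.1 + R * Real.cos θ, xc.2 + R * Real.sin θ) : ℝ × ℝ)) - y).1 ^ 2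
            + ((((xc.1 + R * Real.cos θ, xc.2 + R * Real.sin θ) : ℝ × ℝ)) - y).2 ^ 2))
        • ((((xc.1 + R * Real.cos θ, xc.2 + R * Real.sin θ) : ℝ × ℝ)) - y))
        ∂(uniformCircleMeasure xc R))
    = ((π⁻¹ * R * ∫ φ in (0:ℝ)..π, ringG f R φ * (1 - Real.cos φ))
        • ((Real.cos θ, Real.sin θ) : ℝ × ℝ)) := by
  set x : ℝ × ℝ := (xc.1 + R * Real.cos θ, xc.2 + R * Real.sin θ) with hx
  set I : ℝ := ∫ φ in (0:ℝ)..π, ringG f R φ * (1 - Real.cos φ) with hI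
  set g : ℝ → ℝ := ringG f R with hg
  have hgc : Continuous g := ringG_cont hf hR.le
  have hgper : Function.Periodic g (2 * π) := ringG_periodic f R
  have hgeven : ∀ ψ, g (-ψ) = g ψ := ringG_even f R
  -- continuity of the integrand
  have hccont : Continuous fun v : ℝ × ℝ => f (Real.sqrt (v.1 ^ 2 + v.2 ^ 2)) := by
    have hc : Continuous fun v : ℝ × ℝ => Real.sqrt (v.1 ^ 2 + v.2 ^ 2) :=
      Real.continuous_sqrt.comp ((continuous_fst.pow 2).add (continuous_snd.pow 2))
    exact hf.comp_continuous hc fun v => Real.sqrt_nonneg _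
  have hFcont : Continuous fun y : ℝ × ℝ =>
      f (Real.sqrt ((x - y).1 ^ 2 + (x - y).2 ^ 2)) • (x - y) :=
    (hccont.comp (continuous_const.sub continuous_id)).smul
      (continuous_const.sub continuous_id)
  have hparam : Continuous fun φ : ℝ => ((xc.1 + R * Real.cos φ, xc.2 + R * Real.sin φ) : ℝ × ℝ) :=
    (continuous_const.add (continuous_const.mul Real.continuous_cos)).prodMk
      (continuous_const.add (continuous_const.mul Real.continuous_sin))
  rw [uniformCircleMeasure, integral_map hparam.measurable.aemeasurable
    hFcont.aestronglyMeasurable, integral_smul_measure,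
    ENNReal.toReal_ofReal (by positivity : (0:ℝ) ≤ (2 * π)⁻¹)]
  -- pointwise simplification of the integrand
  have hpt : ∀ φ : ℝ,
      (f (Real.sqrt ((x - (xc.1 + R * Real.cos φ, xc.2 + R * Real.sin φ)).1 ^ 2
          + (x - (xc.1 + R * Real.cos φ, xc.2 + R * Real.sin φ)).2 ^ 2))
        • (x - (xc.1 + R * Real.cos φ, xc.2 + R * Real.sin φ)))
      = (g (θ - φ) * (R * (Real.cos θ - Real.cos φ))) • ((1:ℝ), (0:ℝ))
        + (g (θ - φ) * (R * (Real.sin θ - Real.sin φ))) • ((0:ℝ), (1:ℝ)) := by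
    intro φ
    have hsub : x - (xc.1 + R * Real.cos φ, xc.2 + R * Real.sin φ)
        = ((R * (Real.cos θ - Real.cos φ), R * (Real.sin θ - Real.sin φ)) : ℝ × ℝ) := by
      rw [hx]; apply Prod.ext <;> simp <;> ring
    rw [hsub]
    have harg : Real.sqrt ((R * (Real.cos θ - Real.cos φ)) ^ 2
        + (R * (Real.sin θ - Real.sin φ)) ^ 2)
        = R * Real.sqrt ((1 - Real.cos (θ - φ)) ^ 2 + Real.sin (θ - φ) ^ 2) := by
      rw [show (R * (Real.cos θ - Real.cos φ)) ^ 2 + (R * (Real.sin θ - Real.sin φ)) ^ 2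
          = R ^ 2 * (((Real.cos θ - Real.cos φ)) ^ 2 + ((Real.sin θ - Real.sin φ)) ^ 2) by ring,
        Real.sqrt_mul (sq_nonneg R), Real.sqrt_sq hR.le, trig_key]
    show (f _ • _ : ℝ × ℝ) = _
    rw [harg]
    have : f (R * Real.sqrt ((1 - Real.cos (θ - φ)) ^ 2 + Real.sin (θ - φ) ^ 2)) = g (θ - φ) := rfl
    rw [this]
    apply Prod.ext <;> simp [Prod.smul_fst, Prod.smul_snd] <;> ring
  -- convert set integral to interval integral
  have hIco : ∫ φ in Set.Ico 0 (2 * π),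
      (f (Real.sqrt ((x - (xc.1 + R * Real.cos φ, xc.2 + R * Real.sin φ)).1 ^ 2
          + (x - (xc.1 + R * Real.cos φ, xc.2 + R * Real.sin φ)).2 ^ 2))
        • (x - (xc.1 + R * Real.cos φ, xc.2 + R * Real.sin φ)))
      = ∫ φ in (0:ℝ)..(2 * π),
      (f (Real.sqrt ((x - (xc.1 + R * Real.cos φ, xc.2 + R * Real.sin φ)).1 ^ 2
          + (x - (xc.1 + R * Real.cos φ, xc.2 + R * Real.sin φ)).2 ^ 2))
        • (x - (xc.1 + R * Real.cos φ, xc.2 + R * Real.sin φ))) := by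
    rw [intervalIntegral.integral_of_le (by positivity), integral_Ico_eq_integral_Ioo,
      integral_Ioc_eq_integral_Ioo]
  rw [hIco]
  rw [intervalIntegral.integral_congr (fun φ _ => hpt φ)]
  -- integrability of the two scalar pieces
  have hcont1 : Continuous fun φ => g (θ - φ) * (R * (Real.cos θ - Real.cos φ)) :=
    (hgc.comp (continuous_const.sub continuous_id)).mul
      (continuous_const.mul (continuous_const.sub Real.continuous_cos))
  have hcont2 : Continuous fun φ => g (θ - φ) * (R * (Real.sin θ - Real.sin φ)) :=
    (hgc.comp (continuous_const.sub continuous_id)).mul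
      (continuous_const.mul (continuous_const.sub Real.continuous_sin))
  rw [intervalIntegral.integral_add
    (f := fun φ => (g (θ - φ) * (R * (Real.cos θ - Real.cos φ))) • ((1:ℝ), (0:ℝ)))
    (g := fun φ => (g (θ - φ) * (R * (Real.sin θ - Real.sin φ))) • ((0:ℝ), (1:ℝ)))
    ((hcont1.smul continuous_const).intervalIntegrable _ _)
    ((hcont2.smul continuous_const).intervalIntegrable _ _),
    intervalIntegral.integral_smul_const, intervalIntegral.integral_smul_const]
  -- substitution ψ = θ - φ in each scalar integral
  set A : ℝ := ∫ ψ in (0:ℝ)..(2 * π), g ψ * (1 - Real.cos ψ) with hA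
  set B : ℝ := ∫ ψ in (0:ℝ)..(2 * π), g ψ * Real.sin ψ with hB
  have hBzero : B = 0 := by
    apply odd_integral (hgc.mul Real.continuous_sin)
    · intro ψ; show g (-ψ) * Real.sin (-ψ) = -(g ψ * Real.sin ψ)
      rw [hgeven ψ, Real.sin_neg]; ring
    · intro ψ; show g (ψ + 2 * π) * Real.sin (ψ + 2 * π) = g ψ * Real.sin ψ
      rw [hgper ψ, Real.sin_add_two_pi]
  have hA2I : A = 2 * I := by
    rw [hA, hI]
    apply even_integral (hgc.mul (continuous_const.sub Real.continuous_cos))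
    · intro ψ; show g (-ψ) * (1 - Real.cos (-ψ)) = g ψ * (1 - Real.cos ψ)
      rw [hgeven ψ, Real.cos_neg]
    · intro ψ; show g (ψ + 2 * π) * (1 - Real.cos (ψ + 2 * π)) = g ψ * (1 - Real.cos ψ)
      rw [hgper ψ, Real.cos_add_two_pi]
  have hsub1 : (∫ φ in (0:ℝ)..(2 * π), g (θ - φ) * (R * (Real.cos θ - Real.cos φ)))
      = R * Real.cos θ * A - R * Real.sin θ * B := by
    have hper1 : Function.Periodic
        (fun ψ => g ψ * (R * (Real.cos θ - Real.cos (θ - ψ)))) (2 * π) := by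
      intro ψ
      simp only [hgper ψ]
      rw [show θ - (ψ + 2 * π) = (θ - ψ) - 2 * π by ring, Real.cos_sub_two_pi]
    have e1 : (∫ φ in (0:ℝ)..(2 * π), g (θ - φ) * (R * (Real.cos θ - Real.cos φ)))
        = ∫ ψ in (θ - 2 * π)..(θ - 0), g ψ * (R * (Real.cos θ - Real.cos (θ - ψ))) := by
      rw [← intervalIntegral.integral_comp_sub_left
        (fun ψ => g ψ * (R * (Real.cos θ - Real.cos (θ - ψ)))) θ]
      apply intervalIntegral.integral_congr
      intro φ _
      simp only []
      rw [show θ - (θ - φ) = φ by ring]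
    have e2 : (∫ ψ in (θ - 2 * π)..(θ - 0), g ψ * (R * (Real.cos θ - Real.cos (θ - ψ))))
        = ∫ ψ in (0:ℝ)..(2 * π), g ψ * (R * (Real.cos θ - Real.cos (θ - ψ))) := by
      have := hper1.intervalIntegral_add_eq (θ - 2 * π) 0
      rw [show θ - 2 * π + 2 * π = θ - 0 by ring] at this
      rw [this]; norm_num
    have e3 : (∫ ψ in (0:ℝ)..(2 * π), g ψ * (R * (Real.cos θ - Real.cos (θ - ψ))))
        = ∫ ψ in (0:ℝ)..(2 * π),
          (R * Real.cos θ * (g ψ * (1 - Real.cos ψ)) - R * Real.sin θ * (g ψ * Real.sin ψ)) := by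
      apply intervalIntegral.integral_congr
      intro ψ _
      simp only []
      rw [Real.cos_sub]
      ring
    rw [e1, e2, e3, intervalIntegral.integral_sub, intervalIntegral.integral_const_mul,
      intervalIntegral.integral_const_mul]
    · exact (continuous_const.mul
        (hgc.mul (continuous_const.sub Real.continuous_cos))).intervalIntegrable _ _
    · exact (continuous_const.mul (hgc.mul Real.continuous_sin)).intervalIntegrable _ _
  have hsub2 : (∫ φ in (0:ℝ)..(2 * π), g (θ - φ) * (R * (Real.sin θ - Real.sin φ)))
      = R * Real.sin θ * A + R * Real.cos θ * B := by
    have hper1 : Function.Periodic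
        (fun ψ => g ψ * (R * (Real.sin θ - Real.sin (θ - ψ)))) (2 * π) := by
      intro ψ
      simp only [hgper ψ]
      rw [show θ - (ψ + 2 * π) = (θ - ψ) - 2 * π by ring, Real.sin_sub_two_pi]
    have e1 : (∫ φ in (0:ℝ)..(2 * π), g (θ - φ) * (R * (Real.sin θ - Real.sin φ)))
        = ∫ ψ in (θ - 2 * π)..(θ - 0), g ψ * (R * (Real.sin θ - Real.sin (θ - ψ))) := by
      rw [← intervalIntegral.integral_comp_sub_left
        (fun ψ => g ψ * (R * (Real.sin θ - Real.sin (θ - ψ)))) θ]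
      apply intervalIntegral.integral_congr
      intro φ _
      simp only []
      rw [show θ - (θ - φ) = φ by ring]
    have e2 : (∫ ψ in (θ - 2 * π)..(θ - 0), g ψ * (R * (Real.sin θ - Real.sin (θ - ψ))))
        = ∫ ψ in (0:ℝ)..(2 * π), g ψ * (R * (Real.sin θ - Real.sin (θ - ψ))) := by
      have := hper1.intervalIntegral_add_eq (θ - 2 * π) 0
      rw [show θ - 2 * π + 2 * π = θ - 0 by ring] at this
      rw [this]; norm_num
    have e3 : (∫ ψ in (0:ℝ)..(2 * π), g ψ * (R * (Real.sin θ - Real.sin (θ - ψ))))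
        = ∫ ψ in (0:ℝ)..(2 * π),
          (R * Real.sin θ * (g ψ * (1 - Real.cos ψ)) + R * Real.cos θ * (g ψ * Real.sin ψ)) := by
      apply intervalIntegral.integral_congr
      intro ψ _
      simp only []
      rw [Real.sin_sub]
      ring
    rw [e1, e2, e3, intervalIntegral.integral_add, intervalIntegral.integral_const_mul,
      intervalIntegral.integral_const_mul]
    · exact (continuous_const.mul
        (hgc.mul (continuous_const.sub Real.continuous_cos))).intervalIntegrable _ _
    · exact (continuous_const.mul (hgc.mul Real.continuous_sin)).intervalIntegrable _ _
  rw [hsub1, hsub2, hBzero, hA2I]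
  have hπ : π ≠ 0 := Real.pi_ne_zero
  apply Prod.ext <;> simp [Prod.smul_fst, Prod.smul_snd] <;> field_simp <;> ring

theorem ring_equilibrium_iff
    (f : ℝ → ℝ) (hf : ContinuousOn f (Set.Ici 0))
    (R : ℝ) (hR : 0 < R) (xc : ℝ × ℝ) :
    (∀ x ∈ Set.range (fun φ : ℝ =>
        ((xc.1 + R * Real.cos φ, xc.2 + R * Real.sin φ) : ℝ × ℝ)),
      ∫ y, (f (Real.sqrt ((x - y).1 ^ 2 + (x - y).2 ^ 2)) • (x - y))
          ∂(uniformCircleMeasure xc R) = 0)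
    ↔ ∫ φ in (0:ℝ)..Real.pi,
        f (R * Real.sqrt ((1 - Real.cos φ) ^ 2 + Real.sin φ ^ 2))
          * (1 - Real.cos φ) = 0 := by
  have hIeq : (∫ φ in (0:ℝ)..π, ringG f R φ * (1 - Real.cos φ))
      = ∫ φ in (0:ℝ)..Real.pi,
        f (R * Real.sqrt ((1 - Real.cos φ) ^ 2 + Real.sin φ ^ 2)) * (1 - Real.cos φ) := rfl
  constructor
  · intro h
    have h0 := h (xc.1 + R * Real.cos 0, xc.2 + R * Real.sin 0) ⟨0, rfl⟩
    rw [ring_key f hf R hR xc 0] at h0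
    have h1 : π⁻¹ * R * (∫ φ in (0:ℝ)..π, ringG f R φ * (1 - Real.cos φ)) = 0 := by
      have := congrArg Prod.fst h0
      simpa using this
    rw [← hIeq]
    exact (mul_eq_zero.mp h1).resolve_left
      (mul_ne_zero (inv_ne_zero Real.pi_ne_zero) hR.ne')
  · intro h x hx
    obtain ⟨θ, rfl⟩ := hx
    rw [ring_key f hf R hR xc θ]
    have hz : (∫ φ in (0:ℝ)..π, ringG f R φ * (1 - Real.cos φ)) = 0 := by rw [hIeq]; exact h
    rw [hz]
    simp
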